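/- arXiv:1604.01215 — 2 statements merged into one kernel-verified Lean document; each statement's English description precedes it below -/
import Mathlib

section
/- Fix a real number ω > 0 and t₀ ∈ ℝ, and suppose β : (words over the alphabet ℤ) → ℂ satisfies the recursions: β_k(t₀) = 0 for each single letter k ≠ 0; β_0(t₀) = 1; β_{0^{r+1}}(t₀) = 0 for r ≥ 1; β_{0^r k}(t₀) = (i/(kω))·(β_{0^{r−1} k}(t₀) − β_{0^r}(t₀)·e^{ikωt₀}) for k ≠ 0, r ≥ 1; β_{k ℓ₁⋯ℓ_s}(t₀) = (i/(kω))·(e^{ikωt₀}·β_{ℓ₁⋯ℓ_s}(t₀) − β_{(k+ℓ₁) ℓ₂⋯ℓ_s}(t₀)) for k ≠ 0, s ≥ 1; and β_{0^r k ℓ₁⋯ℓ_s}(t₀) = (i/(kω))·(β_{0^{r−1} k ℓ₁⋯ℓ_s}(t₀) − β_{0^r (k+ℓ₁) ℓ₂⋯ℓ_s}(t₀)) for k ≠ 0, r ≥ 1, s ≥ 1. Then for every nonempty word w of n letters there exists a constant C ≥ 0, depending only on the word w, such that for all ω > 0 and all t₀ ∈ ℝ, |β_w(t₀)| ≤ C·ω^{−(n−1)}.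 -/
open Complex

lemma stmt6_decomp : ∀ l : List ℤ, ∃ r t, l = List.replicate r 0 ++ t ∧
    (t = [] ∨ ∃ k rest, t = k :: rest ∧ k ≠ 0) := by
  intro l
  induction l with
  | nil => exact ⟨0, [], rfl, Or.inl rfl⟩
  | cons a l ih =>
    by_cases ha : a = 0
    · obtain ⟨r, t, hl, ht⟩ := ih
      exact ⟨r + 1, t, by simp [hl, List.replicate_succ, ha], ht⟩
    · exact ⟨0, a :: l, rfl, Or.inr ⟨a, l, rfl, ha⟩⟩

lemma stmt6_expabs (k : ℤ) (ω t₀ : ℝ) :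
    ‖Complex.exp (Complex.I * (k : ℂ) * (ω : ℂ) * (t₀ : ℂ))‖ = 1 := by
  have : Complex.I * (k : ℂ) * (ω : ℂ) * (t₀ : ℂ) = (((k : ℝ) * ω * t₀ : ℝ) : ℂ) * Complex.I := by
    push_cast; ring
  rw [this, Complex.norm_exp_ofReal_mul_I]

lemma stmt6_key (k : ℤ) (hk : k ≠ 0) (ω : ℝ) (hω : 0 < ω) (x y : ℂ) (C₁ C₂ : ℝ) (m : ℕ)
    (hx : ‖x‖ ≤ C₁ / ω ^ m) (hy : ‖y‖ ≤ C₂ / ω ^ m) :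
    ‖(Complex.I / ((k : ℂ) * (ω : ℂ))) * (x - y)‖ ≤ (C₁ + C₂) / ω ^ (m + 1) := by
  have hk1 : (1 : ℝ) ≤ |(k : ℝ)| := by
    have : (1 : ℤ) ≤ |k| := Int.one_le_abs hk
    calc (1:ℝ) ≤ ((|k| : ℤ) : ℝ) := by exact_mod_cast this
    _ = |(k : ℝ)| := by push_cast; rfl
  have hkpos : (0:ℝ) < |(k : ℝ)| := lt_of_lt_of_le one_pos hk1
  have habs : ‖Complex.I / ((k : ℂ) * (ω : ℂ))‖ = 1 / (|(k : ℝ)| * ω) := by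
    rw [norm_div, norm_mul, Complex.norm_I]
    simp [Complex.norm_intCast, Complex.norm_real, abs_of_pos hω]
  rw [norm_mul, habs]
  have h1 : ‖x - y‖ ≤ (C₁ + C₂) / ω ^ m := by
    calc ‖x - y‖ ≤ ‖x‖ + ‖y‖ := by
          simpa using norm_sub_le x y
    _ ≤ C₁ / ω ^ m + C₂ / ω ^ m := add_le_add hx hy
    _ = (C₁ + C₂) / ω ^ m := (add_div C₁ C₂ _).symm
  have hfrac : 1 / (|(k : ℝ)| * ω) ≤ 1 / ω := by
    apply one_div_le_one_div_of_le hω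
    nlinarith
  have hp : 0 < ω ^ m := pow_pos hω m
  have hC₁ : 0 ≤ C₁ := by
    by_contra h; push_neg at h
    have : C₁ / ω ^ m < 0 := div_neg_of_neg_of_pos h hp
    linarith [(norm_nonneg x).trans hx]
  have hC₂ : 0 ≤ C₂ := by
    by_contra h; push_neg at h
    have : C₂ / ω ^ m < 0 := div_neg_of_neg_of_pos h hp
    linarith [(norm_nonneg y).trans hy]
  have hC : 0 ≤ C₁ + C₂ := by linarith
  calc 1 / (|(k : ℝ)| * ω) * ‖x - y‖
      ≤ (1 / ω) * ((C₁ + C₂) / ω ^ m) := by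
        apply mul_le_mul hfrac h1 (norm_nonneg _)
        positivity
  _ = (C₁ + C₂) / ω ^ (m + 1) := by
        rw [div_mul_div_comm, one_mul, ← pow_succ']
/-- If the word-series coefficients `β = β(ω, t₀) : words over ℤ → ℂ` satisfy the
averaging recursions, then for each nonempty word `w` of `n` letters there is a
constant `C ≥ 0`, depending only on `w`, with `|β_w(t₀)| ≤ C·ω^{-(n-1)}` for all
`ω > 0` and all `t₀`.  Words are lists of integers, with `0^r` encoded as
`List.replicate r 0`. -/
theorem stmt_6 (β : ℝ → ℝ → List ℤ → ℂ)
    (h₁ : ∀ ω : ℝ, 0 < ω → ∀ t₀ : ℝ, ∀ k : ℤ, k ≠ 0 → β ω t₀ [k] = 0)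
    (h₂ : ∀ ω : ℝ, 0 < ω → ∀ t₀ : ℝ, β ω t₀ [0] = 1)
    (h₃ : ∀ ω : ℝ, 0 < ω → ∀ t₀ : ℝ, ∀ r : ℕ, 1 ≤ r →
      β ω t₀ (List.replicate (r + 1) 0) = 0)
    (h₄ : ∀ ω : ℝ, 0 < ω → ∀ t₀ : ℝ, ∀ r : ℕ, 1 ≤ r → ∀ k : ℤ, k ≠ 0 →
      β ω t₀ (List.replicate r 0 ++ [k]) =
        (Complex.I / ((k : ℂ) * (ω : ℂ))) *
          (β ω t₀ (List.replicate (r - 1) 0 ++ [k]) -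
            β ω t₀ (List.replicate r 0) *
              Complex.exp (Complex.I * (k : ℂ) * (ω : ℂ) * (t₀ : ℂ))))
    (h₅ : ∀ ω : ℝ, 0 < ω → ∀ t₀ : ℝ, ∀ k : ℤ, k ≠ 0 → ∀ ℓ : ℤ, ∀ rest : List ℤ,
      β ω t₀ (k :: ℓ :: rest) =
        (Complex.I / ((k : ℂ) * (ω : ℂ))) *
          (Complex.exp (Complex.I * (k : ℂ) * (ω : ℂ) * (t₀ : ℂ)) *
              β ω t₀ (ℓ :: rest) -
            β ω t₀ ((k + ℓ) :: rest)))
    (h₆ : ∀ ω : ℝ, 0 < ω → ∀ t₀ : ℝ, ∀ r : ℕ, 1 ≤ r → ∀ k : ℤ, k ≠ 0 →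
      ∀ ℓ : ℤ, ∀ rest : List ℤ,
      β ω t₀ (List.replicate r 0 ++ k :: ℓ :: rest) =
        (Complex.I / ((k : ℂ) * (ω : ℂ))) *
          (β ω t₀ (List.replicate (r - 1) 0 ++ k :: ℓ :: rest) -
            β ω t₀ (List.replicate r 0 ++ (k + ℓ) :: rest))) :
    ∀ w : List ℤ, w ≠ [] → ∃ C : ℝ, 0 ≤ C ∧
      ∀ ω : ℝ, 0 < ω → ∀ t₀ : ℝ,
        ‖β ω t₀ w‖ ≤ C / ω ^ (w.length - 1) := by
  suffices H : ∀ n : ℕ, ∀ w : List ℤ, w.length = n → w ≠ [] → ∃ C : ℝ, 0 ≤ C ∧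
      ∀ ω : ℝ, 0 < ω → ∀ t₀ : ℝ,
        ‖β ω t₀ w‖ ≤ C / ω ^ (w.length - 1) by
    intro w hw; exact H w.length w rfl hw
  intro n
  induction n using Nat.strong_induction_on with
  | _ n IH =>
    intro w hwn hw
    obtain ⟨r, t, hw_eq, ht⟩ := stmt6_decomp w
    rcases ht with rfl | ⟨k, rest, rfl, hk⟩
    · -- w = replicate r 0
      rw [List.append_nil] at hw_eq
      subst hw_eq
      match r with
      | 0 => simp at hw
      | 1 =>
        refine ⟨1, zero_le_one, fun ω hω t₀ => ?_⟩
        have := h₂ ω hω t₀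
        simp only [List.replicate, List.replicate_succ] at this ⊢
        rw [this]
        simp
      | (r' + 2) =>
        refine ⟨0, le_refl 0, fun ω hω t₀ => ?_⟩
        have := h₃ ω hω t₀ (r' + 1) (by omega)
        rw [this]
        simp
    · -- w = replicate r 0 ++ k :: rest, k ≠ 0
      subst hw_eq
      match r, rest with
      | 0, [] =>
        refine ⟨0, le_refl 0, fun ω hω t₀ => ?_⟩
        simp only [List.replicate, List.nil_append]
        rw [h₁ ω hω t₀ k hk]
        simp
      | 0, (ℓ :: rest') =>
        obtain ⟨C₁, hC₁, hb₁⟩ := IH (rest'.length + 1) (by simp at hwn; omega)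
          (ℓ :: rest') (by simp) (by simp)
        obtain ⟨C₂, hC₂, hb₂⟩ := IH (rest'.length + 1) (by simp at hwn; omega)
          ((k + ℓ) :: rest') (by simp) (by simp)
        refine ⟨C₁ + C₂, by linarith, fun ω hω t₀ => ?_⟩
        simp only [List.replicate, List.nil_append]
        rw [h₅ ω hω t₀ k hk ℓ rest']
        have key := stmt6_key k hk ω hω
          (Complex.exp (Complex.I * (k : ℂ) * (ω : ℂ) * (t₀ : ℂ)) * β ω t₀ (ℓ :: rest'))
          (β ω t₀ ((k + ℓ) :: rest')) C₁ C₂ rest'.length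
          (by rw [norm_mul, stmt6_expabs, one_mul]
              simpa using hb₁ ω hω t₀)
          (by simpa using hb₂ ω hω t₀)
        simpa using key
      | (r' + 1), [] =>
        obtain ⟨C₁, hC₁, hb₁⟩ := IH (r' + 1) (by simp at hwn ⊢; omega)
          (List.replicate r' 0 ++ [k]) (by simp) (by simp)
        obtain ⟨C₂, hC₂, hb₂⟩ := IH (r' + 1) (by simp at hwn ⊢; omega)
          (List.replicate (r' + 1) 0) (by simp) (by simp)
        refine ⟨C₁ + C₂, by linarith, fun ω hω t₀ => ?_⟩
        rw [h₄ ω hω t₀ (r' + 1) (by omega) k hk]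
        have key := stmt6_key k hk ω hω
          (β ω t₀ (List.replicate ((r' + 1) - 1) 0 ++ [k]))
          (β ω t₀ (List.replicate (r' + 1) 0) *
            Complex.exp (Complex.I * (k : ℂ) * (ω : ℂ) * (t₀ : ℂ))) C₁ C₂ r'
          (by simpa using hb₁ ω hω t₀)
          (by rw [norm_mul, stmt6_expabs, mul_one]
              simpa using hb₂ ω hω t₀)
        simpa using key
      | (r' + 1), (ℓ :: rest') =>
        obtain ⟨C₁, hC₁, hb₁⟩ := IH (r' + rest'.length + 2) (by simp at hwn ⊢; omega)
          (List.replicate r' 0 ++ k :: ℓ :: rest') (by simp; omega) (by simp)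
        obtain ⟨C₂, hC₂, hb₂⟩ := IH (r' + rest'.length + 2) (by simp at hwn ⊢; omega)
          (List.replicate (r' + 1) 0 ++ (k + ℓ) :: rest') (by simp; omega) (by simp)
        refine ⟨C₁ + C₂, by linarith, fun ω hω t₀ => ?_⟩
        rw [h₆ ω hω t₀ (r' + 1) (by omega) k hk ℓ rest']
        have key := stmt6_key k hk ω hω
          (β ω t₀ (List.replicate ((r' + 1) - 1) 0 ++ k :: ℓ :: rest'))
          (β ω t₀ (List.replicate (r' + 1) 0 ++ (k + ℓ) :: rest')) C₁ C₂
          (r' + rest'.length + 1)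
          (by have := hb₁ ω hω t₀
              simp only [List.length_append, List.length_replicate, List.length_cons] at this
              simpa [Nat.add_sub_cancel, Nat.add_assoc] using this)
          (by have := hb₂ ω hω t₀
              simp only [List.length_append, List.length_replicate, List.length_cons] at this
              convert this using 3
              omega)
        have hlen : (List.replicate (r' + 1) (0:ℤ) ++ k :: ℓ :: rest').length - 1 =
            r' + rest'.length + 2 := by simp; omega
        rw [hlen]
        convert key using 2
end

section
/- Let A, B, ν be real numbers and ω > 0. Define g₀, g₁, g₂, g₃, g₋₁, g₋₂, g₋₃ : ℝ² → ℂ² by g₀(φ,y) = (ν, y − (3/2)·B²·y − y³ + A·cos φ), g₁(φ,y) = (0, −(i/2)·B + (3i/8)·B³ + (3i/2)·B·y²), g₂(φ,y) = (0, (3/4)·B²·y), g₃(φ,y) = (0, −(i/8)·B³), and g₋ₖ = conjugate of gₖ; for a two-letter word k₁k₂ define g_{k₁k₂}(x) = g_{k₂}'(x)·g_{k₁}(x), where g_{k₂}'(x) is the Jacobian matrix of g_{k₂} at x. Then for all (φ, y) ∈ ℝ²: g₀(φ,y) + Σ_{k ∈ {±1,±2,±3}} (i/(kω))·( g_{k0}(φ,y)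 − g_{0k}(φ,y) − g_{k(−k)}(φ,y) ) = ( ν , y − (3/2)·B²·y − y³ + A·cos φ + (1/ω)·( B − (13/6)·B³ + B⁵ − (5/2)·B³·y² + 3·B·y⁴ + 6·A·B·y·cos φ ) ). -/
open Complex

/-- The Fourier coefficient functions `gₖ : ℝ² → ℂ²` of the vibrational resonance
system, with `g₋ₖ` the complex conjugate of `gₖ` and `gₖ = 0` for `|k| > 3`. -/
noncomputable def vrCoeff (A B ν : ℝ) : ℤ → ℝ → ℝ → ℂ × ℂ := fun k φ y =>
  if k = 0 then ((ν : ℂ),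
    ((y - (3 / 2) * B ^ 2 * y - y ^ 3 + A * Real.cos φ : ℝ) : ℂ))
  else if k = 1 then (0,
    -(Complex.I / 2) * (B : ℂ) + (3 * Complex.I / 8) * (B : ℂ) ^ 3
      + (3 * Complex.I / 2) * (B : ℂ) * (y : ℂ) ^ 2)
  else if k = 2 then (0, (((3 / 4) * B ^ 2 * y : ℝ) : ℂ))
  else if k = 3 then (0, -(Complex.I / 8) * (B : ℂ) ^ 3)
  else if k = -1 then (0, starRingEnd ℂ
    (-(Complex.I / 2) * (B : ℂ) + (3 * Complex.I / 8) * (B : ℂ) ^ 3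
      + (3 * Complex.I / 2) * (B : ℂ) * (y : ℂ) ^ 2))
  else if k = -2 then (0, starRingEnd ℂ (((3 / 4) * B ^ 2 * y : ℝ) : ℂ))
  else if k = -3 then (0, starRingEnd ℂ (-(Complex.I / 8) * (B : ℂ) ^ 3))
  else 0

/-- The Jacobian matrix of `h : ℝ² → ℂ²` at the point `(φ, y)`, applied (as a
complex 2×2 matrix of partial derivatives) to the complex vector `v ∈ ℂ²`. -/
noncomputable def jacApply (h : ℝ → ℝ → ℂ × ℂ) (φ y : ℝ) (v : ℂ × ℂ) : ℂ × ℂ :=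
  v.1 • deriv (fun s => h s y) φ + v.2 • deriv (fun s => h φ s) y

/-- The two-letter word basis function `g_{k₁k₂}(x) = g_{k₂}'(x)·g_{k₁}(x)`. -/
noncomputable def wordFun2 (A B ν : ℝ) (k₁ k₂ : ℤ) (φ y : ℝ) : ℂ × ℂ :=
  jacApply (vrCoeff A B ν k₂) φ y (vrCoeff A B ν k₁ φ y)

variable (A B ν φ y : ℝ)

private lemma hq (a b : ℂ) (y : ℝ) :
    HasDerivAt (fun s : ℝ => ((0 : ℂ), a + b * ((s : ℂ)) ^ 2)) ((0 : ℂ), b * (2 * y)) y := by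
  refine (hasDerivAt_const y (0:ℂ)).prodMk ?_
  have h : HasDerivAt (fun z : ℂ => a + b * z ^ 2) (b * (2 * (y:ℂ))) (y:ℂ) := by
    simpa [mul_comm] using (((hasDerivAt_pow 2 ((y:ℝ):ℂ))).const_mul b).const_add a
  exact h.comp_ofReal

private lemma hlin (c : ℝ) (y : ℝ) :
    HasDerivAt (fun s : ℝ => ((0 : ℂ), ((c * s : ℝ) : ℂ))) ((0 : ℂ), (c : ℂ)) y := by
  refine (hasDerivAt_const y (0:ℂ)).prodMk ?_
  have : HasDerivAt (fun s : ℝ => c * s) (c * 1) y := (hasDerivAt_id y).const_mul c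
  simpa using this.ofReal_comp

variable (A B ν φ y : ℝ)

private lemma Dphi0 : deriv (fun s => vrCoeff A B ν 0 s y) φ
    = ((0 : ℂ), ((-(A * Real.sin φ) : ℝ) : ℂ)) := by
  have h : HasDerivAt (fun s : ℝ => y - 3/2 * B^2 * y - y^3 + A * Real.cos s)
      (A * -Real.sin φ) φ := ((Real.hasDerivAt_cos φ).const_mul A).const_add _
  have h2 := (hasDerivAt_const φ ((ν:ℝ):ℂ)).prodMk h.ofReal_comp
  have e : (fun s => vrCoeff A B ν 0 s y)
      = fun s : ℝ => (((ν:ℝ):ℂ), ((y - 3/2 * B^2 * y - y^3 + A * Real.cos s : ℝ):ℂ)) := by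
    funext s; simp only [vrCoeff, if_pos rfl, if_true]
  rw [e, h2.deriv, Prod.mk.injEq]
  refine ⟨rfl, by norm_num⟩

private lemma Dy0 : deriv (fun s => vrCoeff A B ν 0 φ s) y
    = ((0 : ℂ), ((1 - 3/2 * B^2 - 3 * y^2 : ℝ) : ℂ)) := by
  have h : HasDerivAt (fun s : ℝ => s - 3/2 * B^2 * s - s^3 + A * Real.cos φ)
      (1 - 3/2 * B^2 - 3 * y^2) y := by
    have := (((hasDerivAt_id y).sub ((hasDerivAt_id y).const_mul (3/2 * B^2))).sub
      (hasDerivAt_pow 3 y)).add_const (A * Real.cos φ)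
    exact this.congr_deriv (by norm_num)
  have h2 := (hasDerivAt_const y ((ν:ℝ):ℂ)).prodMk h.ofReal_comp
  have e : (fun s => vrCoeff A B ν 0 φ s)
      = fun s : ℝ => (((ν:ℝ):ℂ), ((s - 3/2 * B^2 * s - s^3 + A * Real.cos φ : ℝ):ℂ)) := by
    funext s; simp only [vrCoeff, if_pos rfl, if_true]
  rw [e, h2.deriv]

private lemma Dphi (k : ℤ) (hk : k ≠ 0) : deriv (fun s => vrCoeff A B ν k s y) φ = 0 := by
  have : (fun s => vrCoeff A B ν k s y) = fun _ => vrCoeff A B ν k 0 y := by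
    funext s; simp [vrCoeff, hk]
  rw [this, deriv_const]

private lemma Dy1 : deriv (fun s => vrCoeff A B ν 1 φ s) y = ((0:ℂ), 3 * Complex.I * B * y) := by
  have h := hq (-(Complex.I / 2) * (B : ℂ) + (3 * Complex.I / 8) * (B : ℂ) ^ 3)
    ((3 * Complex.I / 2) * (B : ℂ)) y
  have e : (fun s : ℝ => vrCoeff A B ν 1 φ s)
      = fun s : ℝ => ((0:ℂ), (-(Complex.I / 2) * (B : ℂ) + (3 * Complex.I / 8) * (B : ℂ) ^ 3)
          + ((3 * Complex.I / 2) * (B : ℂ)) * ((s:ℂ))^2) := by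
    funext s; simp [vrCoeff]
  rw [e, h.deriv, Prod.mk.injEq]; exact ⟨rfl, by ring⟩

private lemma Dym1 : deriv (fun s => vrCoeff A B ν (-1) φ s) y = ((0:ℂ), -(3 * Complex.I * B * y)) := by
  have h := hq ((Complex.I / 2) * (B : ℂ) - (3 * Complex.I / 8) * (B : ℂ) ^ 3)
    (-(3 * Complex.I / 2) * (B : ℂ)) y
  have e : (fun s : ℝ => vrCoeff A B ν (-1) φ s)
      = fun s : ℝ => ((0:ℂ), ((Complex.I / 2) * (B : ℂ) - (3 * Complex.I / 8) * (B : ℂ) ^ 3)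
          + (-(3 * Complex.I / 2) * (B : ℂ)) * ((s:ℂ))^2) := by
    funext s
    simp [vrCoeff, map_add, map_mul, map_pow, Complex.conj_ofReal, map_neg, map_div₀,
      map_ofNat, Complex.conj_I]
    ring
  rw [e, h.deriv, Prod.mk.injEq]; exact ⟨rfl, by ring⟩

private lemma Dy2 : deriv (fun s => vrCoeff A B ν 2 φ s) y = ((0:ℂ), ((3/4 * B^2 : ℝ) : ℂ)) := by
  have h := hlin (3/4 * B^2) y
  have e : (fun s : ℝ => vrCoeff A B ν 2 φ s)
      = fun s : ℝ => ((0:ℂ), ((3/4 * B^2 * s : ℝ) : ℂ)) := by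
    funext s; simp [vrCoeff]
  rw [e, h.deriv]

private lemma Dym2 : deriv (fun s => vrCoeff A B ν (-2) φ s) y = ((0:ℂ), ((3/4 * B^2 : ℝ) : ℂ)) := by
  have h := hlin (3/4 * B^2) y
  have e : (fun s : ℝ => vrCoeff A B ν (-2) φ s)
      = fun s : ℝ => ((0:ℂ), ((3/4 * B^2 * s : ℝ) : ℂ)) := by
    funext s
    simp only [vrCoeff, Int.reduceNeg, Int.reduceEq, reduceIte, Complex.conj_ofReal]
  rw [e, h.deriv]

private lemma Dy3 : deriv (fun s => vrCoeff A B ν 3 φ s) y = 0 := by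
  have e : (fun s : ℝ => vrCoeff A B ν 3 φ s) = fun _ => vrCoeff A B ν 3 φ 0 := by
    funext s; simp [vrCoeff]
  rw [e, deriv_const]

private lemma Dym3 : deriv (fun s => vrCoeff A B ν (-3) φ s) y = 0 := by
  have e : (fun s : ℝ => vrCoeff A B ν (-3) φ s) = fun _ => vrCoeff A B ν (-3) φ 0 := by
    funext s; simp [vrCoeff]
  rw [e, deriv_const]

set_option maxHeartbeats 2000000 in
/-- The averaged system truncated after two-letter words:
`g₀ + ∑_{k∈{±1,±2,±3}} (i/(kω))(g_{k0} - g_{0k} - g_{k(-k)})` equals the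
right-hand side of the second-order averaged vibrational resonance equation. -/
theorem stmt_7 (A B ν ω : ℝ) (hω : 0 < ω) :
    ∀ φ y : ℝ,
      vrCoeff A B ν 0 φ y +
        ∑ k ∈ ({1, -1, 2, -2, 3, -3} : Finset ℤ),
          (Complex.I / ((k : ℂ) * (ω : ℂ))) •
            (wordFun2 A B ν k 0 φ y - wordFun2 A B ν 0 k φ y
              - wordFun2 A B ν k (-k) φ y) =
      ((ν : ℂ),
        ((y - (3 / 2) * B ^ 2 * y - y ^ 3 + A * Real.cos φ
          + (1 / ω) * (B - (13 / 6) * B ^ 3 + B ^ 5 - (5 / 2) * B ^ 3 * y ^ 2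
            + 3 * B * y ^ 4 + 6 * A * B * y * Real.cos φ) : ℝ) : ℂ)) := by
  intro φ y
  have hω' : (ω : ℂ) ≠ 0 := Complex.ofReal_ne_zero.mpr hω.ne'
  rw [show ({1, -1, 2, -2, 3, -3} : Finset ℤ) = {1} ∪ {-1} ∪ {2} ∪ {-2} ∪ {3} ∪ {-3} by decide]
  rw [Finset.sum_union (by decide), Finset.sum_union (by decide), Finset.sum_union (by decide),
    Finset.sum_union (by decide), Finset.sum_union (by decide)]
  simp only [Finset.sum_singleton, wordFun2, jacApply, Int.reduceNeg, neg_neg]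
  rw [Dphi0, Dy0, Dphi A B ν φ y 1 (by decide), Dphi A B ν φ y (-1) (by decide),
    Dphi A B ν φ y 2 (by decide), Dphi A B ν φ y (-2) (by decide),
    Dphi A B ν φ y 3 (by decide), Dphi A B ν φ y (-3) (by decide),
    Dy1 A B ν φ y, Dym1 A B ν φ y, Dy2 A B ν φ y, Dym2 A B ν φ y, Dy3 A B ν φ y,
    Dym3 A B ν φ y]
  simp only [vrCoeff, Int.reduceNeg, Int.reduceEq, reduceIte, if_true, if_pos rfl,
    Complex.conj_ofReal, map_add, map_mul, map_pow, map_neg, map_div₀, map_ofNat,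
    Complex.conj_I, neg_neg]
  rw [Prod.ext_iff]
  refine ⟨?_, ?_⟩
  · simp only [Prod.fst_add, Prod.fst_sub, Prod.smul_fst, Prod.fst_zero, smul_eq_mul,
      smul_zero, Prod.mk_add_mk, Prod.mk_sub_mk, Prod.mk.injEq]
    ring
  · simp only [Prod.snd_add, Prod.snd_sub, Prod.smul_snd, Prod.snd_zero, smul_eq_mul,
      smul_zero, Prod.mk_add_mk, Prod.mk_sub_mk]
    push_cast
    ring_nf
    simp only [Complex.I_sq]
    ring_nf
end
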